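/- The pull-back construction yields a Lie algebroid: given a generalized Lie algebroid ((F,ν,N),[,]_{F,h},(ρ,η)) with h: M → N, the pull-back bundle (h*F, h*ν, M) with anchor ρ^{h*F}(Z^α T_α) = (Z^α · (ρ^i_α ∘ h)) ∂/∂x^i and bracket determined by [T_α,T_β] = (L^γ_{αβ}∘h) T_γ together with the Leibniz rule [T_α, f T_β] = f (L^γ_{αβ}∘h) T_γ + (ρ^i_α∘h)(∂f/∂x^i) T_β is a Lie algebroid over M. -/

import Mathlib

open scoped BigOperators

section Preamble

universe u v

/-- Abstract model of a generalized Lie algebroid: the `R`-module `M` plays the role of the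
module of sections `Γ(F)` over the function ring `R = F(N)`, `bracket` is `[,]_{F,h}` and
`anchor` is the action of `Γ(Th∘ρ, h∘η)` on functions. -/
structure GenLieAlgebroid (R : Type u) (M : Type v) [CommRing R] [AddCommGroup M]
    [Module R M] where
  bracket : M → M → M
  anchor : M → R → R
  bracket_add_left : ∀ u v w, bracket (u + v) w = bracket u w + bracket v w
  bracket_antisymm : ∀ u v, bracket u v = - bracket v u
  jacobi : ∀ u v w, bracket u (bracket v w) = bracket (bracket u v) w + bracket v (bracket u w)
  leibniz : ∀ (u : M) (f : R) (v : M), bracket u (f • v) = f • bracket u v + anchor u f • v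
  anchor_add : ∀ u v f, anchor (u + v) f = anchor u f + anchor v f
  anchor_smul : ∀ (g : R) u f, anchor (g • u) f = g * anchor u f
  anchor_map_add : ∀ u f g, anchor u (f + g) = anchor u f + anchor u g
  anchor_map_mul : ∀ u f g, anchor u (f * g) = f * anchor u g + g * anchor u f
  anchor_bracket : ∀ u v f,
    anchor (bracket u v) f = anchor u (anchor v f) - anchor v (anchor u f)

variable {R : Type u} {M : Type v} [CommRing R] [AddCommGroup M] [Module R M]

/-- `ω` is a differential `q`-form: multilinear and alternating (sign under permutations). -/
def IsForm {q : ℕ} (ω : (Fin q → M) → R) : Prop :=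
  (∀ (z : Fin q → M) (i : Fin q) (x y : M),
      ω (Function.update z i (x + y)) = ω (Function.update z i x) + ω (Function.update z i y)) ∧
  (∀ (z : Fin q → M) (i : Fin q) (c : R) (x : M),
      ω (Function.update z i (c • x)) = c * ω (Function.update z i x)) ∧
  (∀ (z : Fin q → M) (σ : Equiv.Perm (Fin q)),
      ω (z ∘ σ) = ((Equiv.Perm.sign σ : ℤˣ) : ℤ) • ω z)

/-- The exterior (shuffle) product of a `q`-form and an `r`-form:
`(ω ∧ θ)(z₁,…,z_{q+r}) = Σ_{(q,r)-shuffles σ} sgn(σ) ω(z_{σ(1)},…) θ(z_{σ(q+1)},…)`,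
equal to `(1/(q!r!)) Σ_{σ ∈ Σ_{q+r}} sgn(σ) ω(…) θ(…)`. -/
def wedge {q r : ℕ} (ω : (Fin q → M) → R) (θ : (Fin r → M) → R) :
    (Fin (q + r) → M) → R := fun z =>
  ∑ σ : Equiv.Perm (Fin (q + r)),
    if (∀ i j : Fin q, i < j → σ (Fin.castAdd r i) < σ (Fin.castAdd r j)) ∧
        (∀ i j : Fin r, i < j → σ (Fin.natAdd q i) < σ (Fin.natAdd q j)) then
      ((Equiv.Perm.sign σ : ℤˣ) : ℤ) •
        (ω (fun i => z (σ (Fin.castAdd r i))) * θ (fun j => z (σ (Fin.natAdd q j))))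
    else 0

/-- The covariant Lie derivative along a section `z`:
`(L_z ω)(z₁,…,z_q) = a(z)(ω(z₁,…,z_q)) − Σ_i ω(z₁,…,[z,z_i],…,z_q)`. -/
def lieDeriv (A : GenLieAlgebroid R M) (z : M) {q : ℕ} (ω : (Fin q → M) → R) :
    (Fin q → M) → R := fun zs =>
  A.anchor z (ω zs) - ∑ i : Fin q, ω (Function.update zs i (A.bracket z (zs i)))

/-- Interior product: `(i_z ω)(z₂,…,z_q) = ω(z, z₂,…,z_q)`, with `i_z f = 0` on `0`-forms. -/
def iProd (z : M) {q : ℕ} (ω : (Fin q → M) → R) : (Fin (q - 1) → M) → R :=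
  match q, ω with
  | 0, _ => fun _ => 0
  | _ + 1, ω => fun zs => ω (Fin.cons z zs)

/-- The exterior differentiation operator (Chevalley–Eilenberg formula):
`(dω)(z₀,…,z_q) = Σ_i (−1)^i a(z_i)(ω(…,ẑ_i,…)) + Σ_{i<j} (−1)^{i+j} ω([z_i,z_j],…,ẑ_i,…,ẑ_j,…)`. -/
def extDerivGLA (A : GenLieAlgebroid R M) {q : ℕ} (ω : (Fin q → M) → R) :
    (Fin (q + 1) → M) → R := fun z =>
  (∑ i : Fin (q + 1), (-1 : R) ^ (i : ℕ) * A.anchor (z i) (ω (z ∘ i.succAbove)))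
    + ∑ j : Fin (q + 1), ∑ i : Fin (q + 1),
        if _hij : i < j then
          (-1 : R) ^ ((i : ℕ) + (j : ℕ)) *
            ω (fun k =>
              if _hk : (k : ℕ) = 0 then A.bracket (z i) (z j)
              else
                z ⟨if (k : ℕ) - 1 < (i : ℕ) then (k : ℕ) - 1
                    else if (k : ℕ) < (j : ℕ) then (k : ℕ) else (k : ℕ) + 1,
                  by
                    have h1 := k.isLt
                    have h2 := j.isLt
                    split_ifs <;> omega⟩)
        else 0

end Preamble

namespace PullbackAux

variable {RM : Type*} [CommRing RM] {p : ℕ}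

/-- the anchor of the pull-back algebroid -/
def anch (X : Fin p → RM → RM) (Z : Fin p → RM) (g : RM) : RM := ∑ α, Z α * X α g

/-- the bracket of the pull-back algebroid -/
def br (C : Fin p → Fin p → Fin p → RM) (X : Fin p → RM → RM)
    (Z W : Fin p → RM) : Fin p → RM := fun ε =>
  (∑ α, ∑ β, Z α * W β * C ε α β) + anch X Z (W ε) - anch X W (Z ε)

section Basic
variable (C : Fin p → Fin p → Fin p → RM) (X : Fin p → RM → RM)
variable (hXadd : ∀ α f g, X α (f + g) = X α f + X α g)
variable (hXderiv : ∀ α f g, X α (f * g) = f * X α g + g * X α f)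

include hXadd in
lemma hX0 : ∀ α, X α 0 = 0 := by
  intro α
  have := hXadd α 0 0
  simpa using this.symm

include hXderiv in
lemma hX1 : ∀ α, X α (1 : RM) = 0 := by
  intro α
  have := hXderiv α 1 1
  simp at this
  have h2 : X α 1 + 0 = X α 1 + X α 1 := by simpa [two_mul] using this
  exact ((add_left_cancel h2)).symm

include hXadd in
lemma hXsum : ∀ (α) (s : Finset (Fin p)) (g : Fin p → RM),
    X α (∑ i ∈ s, g i) = ∑ i ∈ s, X α (g i) := by
  intro α s g
  exact map_sum (AddMonoidHom.mk' (X α) (hXadd α)) g s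

lemma anch_add_left (Z W : Fin p → RM) (g : RM) :
    anch X (Z + W) g = anch X Z g + anch X W g := by
  simp [anch, add_mul, Finset.sum_add_distrib]

lemma anch_smul_left (f : RM) (Z : Fin p → RM) (g : RM) :
    anch X (f • Z) g = f * anch X Z g := by
  simp [anch, Finset.mul_sum, mul_assoc]

include hXadd in
lemma anch_map_add (Z : Fin p → RM) (f g : RM) :
    anch X Z (f + g) = anch X Z f + anch X Z g := by
  simp [anch, hXadd, mul_add, Finset.sum_add_distrib]

include hXderiv in
lemma anch_map_mul (Z : Fin p → RM) (f g : RM) :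
    anch X Z (f * g) = f * anch X Z g + g * anch X Z f := by
  simp only [anch, hXderiv, mul_add, Finset.sum_add_distrib, Finset.mul_sum]
  congr 1 <;> exact Finset.sum_congr rfl (fun i _ => by ring)

end Basic

section Anchor
variable (C : Fin p → Fin p → Fin p → RM) (X : Fin p → RM → RM)

lemma sum_comm3 (h : Fin p → Fin p → Fin p → RM) :
    ∑ ε, ∑ α, ∑ β, h ε α β = ∑ α, ∑ β, ∑ ε : Fin p, h ε α β := by
  rw [Finset.sum_comm]
  exact Finset.sum_congr rfl fun α _ => Finset.sum_comm

lemma anch_br (hXadd : ∀ α f g, X α (f + g) = X α f + X α g)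
    (hXderiv : ∀ α f g, X α (f * g) = f * X α g + g * X α f)
    (hclose : ∀ α β g, X α (X β g) - X β (X α g) = ∑ γ, C γ α β * X γ g)
    (U V : Fin p → RM) (g : RM) :
    anch X (br C X U V) g = anch X U (anch X V g) - anch X V (anch X U g) := by
  have R1 : anch X U (anch X V g)
      = ∑ α, ∑ β, (U α * V β * X α (X β g) + U α * X α (V β) * X β g) := by
    simp only [anch, hXsum X hXadd, hXderiv, Finset.mul_sum]
    exact Finset.sum_congr rfl fun α _ => Finset.sum_congr rfl fun β _ => by ring
  have R2 : anch X V (anch X U g)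
      = ∑ α, ∑ β, (U α * V β * X β (X α g) + V β * X β (U α) * X α g) := by
    simp only [anch, hXsum X hXadd, hXderiv, Finset.mul_sum]
    rw [Finset.sum_comm]
    exact Finset.sum_congr rfl fun α _ => Finset.sum_congr rfl fun β _ => by ring
  have L : anch X (br C X U V) g
      = (∑ ε, ∑ α, ∑ β, U α * V β * C ε α β * X ε g)
        + ((∑ ε, ∑ α, U α * X α (V ε) * X ε g)
            - (∑ ε, ∑ α, V α * X α (U ε) * X ε g)) := by
    simp only [anch, br, Finset.sum_mul, add_mul, sub_mul, Finset.sum_add_distrib,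
      Finset.sum_sub_distrib]
    ring
  have key : ∀ α β, ((U α * V β * X α (X β g) + U α * X α (V β) * X β g)
        - (U α * V β * X β (X α g) + V β * X β (U α) * X α g))
      = (∑ ε, U α * V β * C ε α β * X ε g)
        + (U α * X α (V β) * X β g - V β * X β (U α) * X α g) := by
    intro α β
    have h1 : U α * V β * X α (X β g) - U α * V β * X β (X α g)
        = U α * V β * (∑ ε, C ε α β * X ε g) := by
      rw [← mul_sub, hclose]
    have h2 : U α * V β * (∑ ε, C ε α β * X ε g)
        = ∑ ε, U α * V β * C ε α β * X ε g := by
      rw [Finset.mul_sum]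
      exact Finset.sum_congr rfl fun ε _ => by ring
    linear_combination h1 + h2
  have RHS' : (∑ α, ∑ β, (U α * V β * X α (X β g) + U α * X α (V β) * X β g))
        - ∑ α, ∑ β, (U α * V β * X β (X α g) + V β * X β (U α) * X α g)
      = (∑ α, ∑ β, ∑ ε, U α * V β * C ε α β * X ε g)
        + ((∑ α, ∑ β, U α * X α (V β) * X β g)
            - (∑ α, ∑ β, V β * X β (U α) * X α g)) := by
    simp only [← Finset.sum_sub_distrib]
    calc ∑ α, ∑ β, ((U α * V β * X α (X β g) + U α * X α (V β) * X β g)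
          - (U α * V β * X β (X α g) + V β * X β (U α) * X α g))
        = ∑ α, ∑ β, ((∑ ε, U α * V β * C ε α β * X ε g)
            + (U α * X α (V β) * X β g - V β * X β (U α) * X α g)) :=
          Finset.sum_congr rfl fun α _ => Finset.sum_congr rfl fun β _ => key α β
      _ = _ := by simp only [Finset.sum_add_distrib, Finset.sum_sub_distrib]
  rw [L, R1, R2, RHS']
  rw [sum_comm3]
  congr 1
  congr 1
  exact Finset.sum_comm

lemma br_add_left (hXadd : ∀ α f g, X α (f + g) = X α f + X α g)
    (Z Z' W : Fin p → RM) : br C X (Z + Z') W = br C X Z W + br C X Z' W := by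
  funext ε
  simp only [br, Pi.add_apply, anch, add_mul, Finset.sum_add_distrib, hXadd, mul_add]
  ring

lemma br_add_right (hXadd : ∀ α f g, X α (f + g) = X α f + X α g)
    (Z W W' : Fin p → RM) : br C X Z (W + W') = br C X Z W + br C X Z W' := by
  funext ε
  simp only [br, Pi.add_apply, anch, add_mul, Finset.sum_add_distrib, hXadd, mul_add]
  ring

lemma br_zero_right (hXadd : ∀ α f g, X α (f + g) = X α f + X α g)
    (Z : Fin p → RM) : br C X Z 0 = 0 := by
  funext ε
  simp [br, anch, hX0 X hXadd]

lemma br_neg_right (hXadd : ∀ α f g, X α (f + g) = X α f + X α g)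
    (Z W : Fin p → RM) : br C X Z (-W) = - br C X Z W := by
  have h := br_add_right C X hXadd Z W (-W)
  simp only [add_neg_cancel, br_zero_right C X hXadd] at h
  exact (neg_eq_of_add_eq_zero_right h.symm).symm

lemma br_antisymm (hCanti : ∀ ε a c, C ε a c = - C ε c a)
    (Z W : Fin p → RM) : br C X Z W = - br C X W Z := by
  funext ε
  have key : ∑ α, ∑ β, Z α * W β * C ε α β = - ∑ α, ∑ β, W α * Z β * C ε α β := by
    rw [Finset.sum_comm, ← Finset.sum_neg_distrib]
    refine Finset.sum_congr rfl fun β _ => ?_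
    rw [← Finset.sum_neg_distrib]
    refine Finset.sum_congr rfl fun α _ => ?_
    rw [hCanti ε α β]; ring
  simp only [br, Pi.neg_apply, key]
  ring

lemma br_smul_right (hXderiv : ∀ α f g, X α (f * g) = f * X α g + g * X α f)
    (Z : Fin p → RM) (f : RM) (W : Fin p → RM) :
    br C X Z (f • W) = f • br C X Z W + anch X Z f • W := by
  funext ε
  simp only [br, Pi.add_apply, Pi.smul_apply, smul_eq_mul]
  have e1 : (∑ α, ∑ β, Z α * (f * W β) * C ε α β)
      = f * ∑ α, ∑ β, Z α * W β * C ε α β := by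
    rw [Finset.mul_sum]
    refine Finset.sum_congr rfl fun α _ => ?_
    rw [Finset.mul_sum]
    exact Finset.sum_congr rfl fun β _ => by ring
  rw [e1, anch_map_mul X hXderiv Z f (W ε), anch_smul_left X f W (Z ε)]
  ring

lemma X_ite (hXadd : ∀ α f g, X α (f + g) = X α f + X α g)
    (hXderiv : ∀ α f g, X α (f * g) = f * X α g + g * X α f)
    (a : Fin p) (c : Prop) [Decidable c] :
    X a (if c then (1 : RM) else 0) = 0 := by
  split
  · exact hX1 X hXderiv a
  · exact hX0 X hXadd a

lemma br_single_left (hXadd : ∀ α f g, X α (f + g) = X α f + X α g)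
    (hXderiv : ∀ α f g, X α (f * g) = f * X α g + g * X α f)
    (α : Fin p) (W : Fin p → RM) :
    br C X (Pi.single α 1) W = fun ε => (∑ d, W d * C ε α d) + X α (W ε) := by
  funext ε
  simp only [br, anch, Pi.single_apply, ite_mul, one_mul, zero_mul,
    X_ite X hXadd hXderiv, mul_zero, Finset.sum_const_zero, sub_zero,
    Finset.sum_ite_eq', Finset.mem_univ, if_true]
  rw [Finset.sum_comm]
  simp [Finset.sum_ite_eq']

lemma br_single_right (hXadd : ∀ α f g, X α (f + g) = X α f + X α g)
    (hXderiv : ∀ α f g, X α (f * g) = f * X α g + g * X α f)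
    (β : Fin p) (Z : Fin p → RM) :
    br C X Z (Pi.single β 1) = fun ε => (∑ a, Z a * C ε a β) - X β (Z ε) := by
  funext ε
  simp only [br, anch, Pi.single_apply, X_ite X hXadd hXderiv, mul_zero,
    Finset.sum_const_zero, add_zero, ite_mul, mul_ite, one_mul, zero_mul, mul_one,
    Finset.sum_ite_eq', Finset.mem_univ, if_true]

lemma br_single_single (hXadd : ∀ α f g, X α (f + g) = X α f + X α g)
    (hXderiv : ∀ α f g, X α (f * g) = f * X α g + g * X α f)
    (α β : Fin p) :
    br C X (Pi.single α 1) (Pi.single β 1) = fun ε => C ε α β := by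
  rw [br_single_left C X hXadd hXderiv]
  funext ε
  simp [Pi.single_apply, X_ite X hXadd hXderiv, ite_mul]

lemma pi_eq_sum_single (W : Fin p → RM) :
    W = ∑ γ, W γ • (Pi.single γ 1 : Fin p → RM) := by
  funext x
  simp [Finset.sum_apply, Pi.single_apply]

/-- The Jacobiator of the pull-back bracket. -/
def Jb (U V W : Fin p → RM) : Fin p → RM :=
  br C X U (br C X V W) - br C X (br C X U V) W - br C X V (br C X U W)

section Jac
variable (hXadd : ∀ α f g, X α (f + g) = X α f + X α g)
variable (hXderiv : ∀ α f g, X α (f * g) = f * X α g + g * X α f)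
variable (hCanti : ∀ ε a c, C ε a c = - C ε c a)
variable (hclose : ∀ α β g, X α (X β g) - X β (X α g) = ∑ γ, C γ α β * X γ g)

include hXadd hCanti in
lemma Jb_cyclic (U V W : Fin p → RM) : Jb C X U V W = Jb C X V W U := by
  have cyc : ∀ U V W : Fin p → RM, Jb C X U V W
      = br C X U (br C X V W) + br C X V (br C X W U) + br C X W (br C X U V) := by
    intro U V W
    unfold Jb
    rw [br_antisymm C X hCanti (br C X U V) W, br_antisymm C X hCanti U W,
      br_neg_right C X hXadd V (br C X W U)]
    abel
  rw [cyc, cyc]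
  abel

include hXadd in
lemma Jb_add₃ (U V W W' : Fin p → RM) :
    Jb C X U V (W + W') = Jb C X U V W + Jb C X U V W' := by
  unfold Jb
  rw [br_add_right C X hXadd V W W', br_add_right C X hXadd U (br C X V W) (br C X V W'),
    br_add_right C X hXadd (br C X U V) W W', br_add_right C X hXadd U W W',
    br_add_right C X hXadd V (br C X U W) (br C X U W')]
  abel

include hXadd hXderiv hclose in
lemma Jb_smul₃ (U V : Fin p → RM) (f : RM) (W : Fin p → RM) :
    Jb C X U V (f • W) = f • Jb C X U V W := by
  unfold Jb
  rw [br_smul_right C X hXderiv V f W, br_smul_right C X hXderiv U f W,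
    br_add_right C X hXadd U (f • br C X V W) (anch X V f • W),
    br_add_right C X hXadd V (f • br C X U W) (anch X U f • W),
    br_smul_right C X hXderiv U f (br C X V W),
    br_smul_right C X hXderiv U (anch X V f) W,
    br_smul_right C X hXderiv V f (br C X U W),
    br_smul_right C X hXderiv V (anch X U f) W,
    br_smul_right C X hXderiv (br C X U V) f W,
    anch_br C X hXadd hXderiv hclose U V f]
  module

include hXadd hXderiv hCanti in
lemma Jb_single
    (hCjac : ∀ ε α β γ, (∑ δ, C δ β γ * C ε α δ) + X α (C ε β γ)
      = (-((∑ δ, C δ α β * C ε γ δ) + X γ (C ε α β)))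
        + ((∑ δ, C δ α γ * C ε β δ) + X β (C ε α γ)))
    (α β γ : Fin p) :
    Jb C X (Pi.single α 1) (Pi.single β 1) (Pi.single γ 1) = 0 := by
  unfold Jb
  rw [br_single_single C X hXadd hXderiv β γ, br_single_single C X hXadd hXderiv α β,
    br_single_single C X hXadd hXderiv α γ,
    br_single_left C X hXadd hXderiv α (fun ε => C ε β γ),
    br_single_right C X hXadd hXderiv γ (fun ε => C ε α β),
    br_single_left C X hXadd hXderiv β (fun ε => C ε α γ)]
  funext ε
  simp only [Pi.sub_apply, Pi.zero_apply]
  have hj := hCjac ε α β γ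
  have hanti : ∑ d, C d α β * C ε γ d = - ∑ d, C d α β * C ε d γ := by
    rw [← Finset.sum_neg_distrib]
    exact Finset.sum_congr rfl fun d _ => by rw [hCanti ε γ d]; ring
  rw [hanti] at hj
  linear_combination hj

include hXadd hXderiv hCanti hclose in
lemma Jb_zero
    (hCjac : ∀ ε α β γ, (∑ δ, C δ β γ * C ε α δ) + X α (C ε β γ)
      = (-((∑ δ, C δ α β * C ε γ δ) + X γ (C ε α β)))
        + ((∑ δ, C δ α γ * C ε β δ) + X β (C ε α γ)))
    (U V W : Fin p → RM) : Jb C X U V W = 0 := by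
  have lin3 : ∀ U V (W : Fin p → RM),
      Jb C X U V W = ∑ γ, W γ • Jb C X U V (Pi.single γ 1) := by
    intro U V W
    let L : (Fin p → RM) →ₗ[RM] (Fin p → RM) :=
      { toFun := fun W => Jb C X U V W
        map_add' := fun W W' => Jb_add₃ C X hXadd U V W W'
        map_smul' := fun f W => Jb_smul₃ C X hXadd hXderiv hclose U V f W }
    have hW : Jb C X U V W = L (∑ γ, W γ • (Pi.single γ 1 : Fin p → RM)) := by
      rw [← pi_eq_sum_single]; rfl
    rw [hW, map_sum]
    exact Finset.sum_congr rfl fun γ _ => L.map_smul (W γ) _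
  have step1 : ∀ α β (W : Fin p → RM),
      Jb C X (Pi.single α 1) (Pi.single β 1) W = 0 := by
    intro α β W
    rw [lin3]
    refine Finset.sum_eq_zero fun γ _ => ?_
    rw [Jb_single C X hXadd hXderiv hCanti hCjac α β γ, smul_zero]
  have step2 : ∀ α (V W : Fin p → RM), Jb C X (Pi.single α 1) V W = 0 := by
    intro α V W
    rw [Jb_cyclic C X hXadd hCanti, Jb_cyclic C X hXadd hCanti, lin3]
    refine Finset.sum_eq_zero fun β _ => ?_
    rw [Jb_cyclic C X hXadd hCanti, step1, smul_zero]
  rw [lin3]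
  refine Finset.sum_eq_zero fun γ _ => ?_
  rw [Jb_cyclic C X hXadd hCanti, Jb_cyclic C X hXadd hCanti, step2, smul_zero]

end Jac

end Anchor

end PullbackAux

section MainAux

lemma PullbackAux.coeff_eq {RN MN : Type*} [CommRing RN] [AddCommGroup MN] [Module RN MN]
    {p : ℕ} (b : Module.Basis (Fin p) RN MN) {d e : Fin p → RN}
    (h : ∑ γ, d γ • b γ = ∑ γ, e γ • b γ) : d = e := by
  have h1 := b.repr_sum_self d
  rw [h, b.repr_sum_self] at h1
  exact h1.symm

end MainAux


/-- the pull-back construction yields a Lie algebroid.  Here `RN = F(N)`,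
`RM = F(M)`, `φ : F(N) → F(M)` is the pull-back `f ↦ f ∘ h`, `MN = Γ(F)` has frame `b` with
structure functions `Lstr`, and `X α` is the vector field `ρ^{h*F}(T_α) = (ρ^i_α∘h) ∂/∂x^i`
on `M` (a derivation of `F(M)`), compatible with the anchor of the generalized Lie algebroid
through `φ` and closed under commutators via `φ(L^γ_{αβ})`.  Then the free module
`Γ(h*F) ≅ Fin p → F(M)` carries a Lie algebroid structure (a `GenLieAlgebroid` over `F(M)`)
whose anchor is `Z^α T_α ↦ Σ Z^α X_α` and whose bracket satisfies
`[T_α,T_β] = (L^γ_{αβ}∘h) T_γ` (the Leibniz rule `[T_α, f T_β] = f (L^γ_{αβ}∘h) T_γ +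
(ρ^i_α∘h)(∂f/∂x^i) T_β` being part of the `GenLieAlgebroid` axioms). -/
theorem pullback_is_lie_algebroid {RN RM MN : Type*} [CommRing RN] [CommRing RM]
    [AddCommGroup MN] [Module RN MN] {p : ℕ}
    (A : GenLieAlgebroid RN MN) (b : Module.Basis (Fin p) RN MN)
    (Lstr : Fin p → Fin p → Fin p → RN)
    (hL : ∀ α β, A.bracket (b α) (b β) = ∑ γ, Lstr γ α β • b γ)
    (φ : RN →+* RM)
    (X : Fin p → RM → RM)
    (hXadd : ∀ α f g, X α (f + g) = X α f + X α g)
    (hXderiv : ∀ α f g, X α (f * g) = f * X α g + g * X α f)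
    (hcompat : ∀ α f, φ (A.anchor (b α) f) = X α (φ f))
    (hclose : ∀ α β g, X α (X β g) - X β (X α g) = ∑ γ, φ (Lstr γ α β) * X γ g) :
    ∃ B : GenLieAlgebroid RM (Fin p → RM),
      (∀ (Z : Fin p → RM) (g : RM), B.anchor Z g = ∑ α, Z α * X α g) ∧
      (∀ α β, B.bracket (Pi.single α 1) (Pi.single β 1) = fun γ => φ (Lstr γ α β)) := by
  classical
  set C : Fin p → Fin p → Fin p → RM := fun ε a c => φ (Lstr ε a c) with hC
  -- second-argument additivity of the bracket of `A`
  have hba₂ : ∀ u v w, A.bracket u (v + w) = A.bracket u v + A.bracket u w := by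
    intro u v w
    calc A.bracket u (v + w) = -A.bracket (v + w) u := A.bracket_antisymm _ _
      _ = -(A.bracket v u + A.bracket w u) := by rw [A.bracket_add_left]
      _ = A.bracket u v + A.bracket u w := by
          rw [A.bracket_antisymm v u, A.bracket_antisymm w u]; abel
  -- expansion of brackets against the basis
  have expand : ∀ (α : Fin p) (f : Fin p → RN),
      A.bracket (b α) (∑ δ, f δ • b δ)
        = ∑ ε, ((∑ δ, f δ * Lstr ε α δ) + A.anchor (b α) (f ε)) • b ε := by
    intro α f
    calc A.bracket (b α) (∑ δ, f δ • b δ)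
        = ∑ δ, A.bracket (b α) (f δ • b δ) :=
          map_sum (AddMonoidHom.mk' (A.bracket (b α)) (hba₂ (b α))) _ _
      _ = ∑ δ, (f δ • A.bracket (b α) (b δ) + A.anchor (b α) (f δ) • b δ) :=
          Finset.sum_congr rfl fun δ _ => A.leibniz (b α) (f δ) (b δ)
      _ = ∑ δ, f δ • (∑ ε, Lstr ε α δ • b ε) + ∑ δ, A.anchor (b α) (f δ) • b δ := by
          rw [← Finset.sum_add_distrib]
          exact Finset.sum_congr rfl fun δ _ => by rw [hL]
      _ = ∑ ε, (∑ δ, f δ * Lstr ε α δ) • b ε + ∑ ε, A.anchor (b α) (f ε) • b ε := by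
          congr 1
          simp only [Finset.smul_sum, smul_smul]
          rw [Finset.sum_comm]
          exact Finset.sum_congr rfl fun ε _ => (Finset.sum_smul).symm
      _ = ∑ ε, ((∑ δ, f δ * Lstr ε α δ) + A.anchor (b α) (f ε)) • b ε := by
          rw [← Finset.sum_add_distrib]
          exact Finset.sum_congr rfl fun ε _ => (add_smul _ _ _).symm
  -- antisymmetry of the structure functions
  have hLanti : ∀ γ α β, Lstr γ α β = - Lstr γ β α := by
    intro γ α β
    have h := A.bracket_antisymm (b α) (b β)
    rw [hL, hL] at h
    have h2 : ∑ γ, Lstr γ α β • b γ = ∑ γ, (-Lstr γ β α) • b γ := by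
      rw [h, ← Finset.sum_neg_distrib]
      exact Finset.sum_congr rfl fun γ _ => (neg_smul _ _).symm
    exact congrFun (PullbackAux.coeff_eq b h2) γ
  have hCanti : ∀ ε a c, C ε a c = - C ε c a := by
    intro ε a c
    simp only [hC]
    rw [hLanti ε a c, map_neg]
  -- the Jacobi identity for the structure functions
  have keyN : ∀ ε α β γ,
      (∑ δ, Lstr δ β γ * Lstr ε α δ) + A.anchor (b α) (Lstr ε β γ)
        = (-((∑ δ, Lstr δ α β * Lstr ε γ δ) + A.anchor (b γ) (Lstr ε α β)))
          + ((∑ δ, Lstr δ α γ * Lstr ε β δ) + A.anchor (b β) (Lstr ε α γ)) := by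
    intro ε α β γ
    have hj := A.jacobi (b α) (b β) (b γ)
    rw [hL β γ, expand α (fun δ => Lstr δ β γ), hL α β,
      A.bracket_antisymm (∑ δ, Lstr δ α β • b δ) (b γ),
      expand γ (fun δ => Lstr δ α β), hL α γ, expand β (fun δ => Lstr δ α γ)] at hj
    have h2 : ∑ ε, ((∑ δ, Lstr δ β γ * Lstr ε α δ) + A.anchor (b α) (Lstr ε β γ)) • b ε
        = ∑ ε, ((-((∑ δ, Lstr δ α β * Lstr ε γ δ) + A.anchor (b γ) (Lstr ε α β)))
            + ((∑ δ, Lstr δ α γ * Lstr ε β δ) + A.anchor (b β) (Lstr ε α γ))) • b ε := by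
      rw [hj, ← Finset.sum_neg_distrib, ← Finset.sum_add_distrib]
      exact Finset.sum_congr rfl fun ε _ => by module
    exact congrFun (PullbackAux.coeff_eq b h2) ε
  have hCjac : ∀ ε α β γ, (∑ δ, C δ β γ * C ε α δ) + X α (C ε β γ)
      = (-((∑ δ, C δ α β * C ε γ δ) + X γ (C ε α β)))
        + ((∑ δ, C δ α γ * C ε β δ) + X β (C ε α γ)) := by
    intro ε α β γ
    have := congrArg φ (keyN ε α β γ)
    simpa only [map_add, map_neg, map_sum, map_mul, hcompat, hC] using this
  have hcloseC : ∀ α β g, X α (X β g) - X β (X α g) = ∑ γ, C γ α β * X γ g := hclose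
  refine ⟨{ bracket := PullbackAux.br C X
            anchor := PullbackAux.anch X
            bracket_add_left := PullbackAux.br_add_left C X hXadd
            bracket_antisymm := PullbackAux.br_antisymm C X hCanti
            jacobi := fun u v w => ?_
            leibniz := fun u f v => PullbackAux.br_smul_right C X hXderiv u f v
            anchor_add := PullbackAux.anch_add_left X
            anchor_smul := PullbackAux.anch_smul_left X
            anchor_map_add := PullbackAux.anch_map_add X hXadd
            anchor_map_mul := PullbackAux.anch_map_mul X hXderiv
            anchor_bracket := fun u v f =>
              PullbackAux.anch_br C X hXadd hXderiv hcloseC u v f },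
        fun Z g => rfl,
        fun α β => PullbackAux.br_single_single C X hXadd hXderiv α β⟩
  have h := PullbackAux.Jb_zero C X hXadd hXderiv hCanti hcloseC hCjac u v w
  simp only [PullbackAux.Jb] at h
  rw [sub_sub, sub_eq_zero] at h
  exact h
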